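/- Let n ≥ 1, I_{n,n} = diag(1ₙ,−1ₙ), S = [[0,1ₙ],[1ₙ,0]], and J₁ = [[0,1],[−1,0]]. For v = (v′; v″) ∈ ℂ^{2n} with v′, v″ ∈ ℂⁿ, set v₊ = [v′, conj(v″)] ∈ Mat_{n×2}(ℂ). Then: (a) −(i/2)(v v* I_{n,n} − S (v v* I_{n,n})ᵀ S) equals the 2n×2n block matrix −(i/2)·[[v₊ v₊*, −v₊ J₁ v₊ᵀ],[−conj(v₊) J₁ v₊*, −conj(v₊) v₊ᵀ]]; (b) for every h ∈ Mat₂(ℂ) with hᵀ J₁ h = J₁ and h* h = 1₂, the block matrix in (a) is unchanged when v₊ is replaced by v₊ h (Sp(1)-invariance of the moment map). -/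
import Mathlib


open Matrix

/-- The matrix `I_{n,n} = diag(1ₙ, −1ₙ)`. -/
noncomputable def Inn (n : ℕ) : Matrix (Fin n ⊕ Fin n) (Fin n ⊕ Fin n) ℂ :=
  Matrix.fromBlocks 1 0 0 (-1)

/-- The matrix `S = [[0,1ₙ],[1ₙ,0]]`. -/
noncomputable def Smat (n : ℕ) : Matrix (Fin n ⊕ Fin n) (Fin n ⊕ Fin n) ℂ :=
  Matrix.fromBlocks 0 1 1 0

/-- The matrix `J₁ = [[0,1],[−1,0]]`. -/
noncomputable def J1 : Matrix (Fin 1 ⊕ Fin 1) (Fin 1 ⊕ Fin 1) ℂ :=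
  Matrix.fromBlocks 0 1 (-1) 0

/-- For `v = (v′; v″) ∈ ℂ^{2n}`, the matrix `v₊ = [v′, conj(v″)] ∈ Mat_{n×2}(ℂ)`. -/
noncomputable def vPlus (n : ℕ) (v : Fin n ⊕ Fin n → ℂ) :
    Matrix (Fin n) (Fin 1 ⊕ Fin 1) ℂ :=
  Matrix.of fun i c =>
    Sum.elim (fun _ => v (Sum.inl i)) (fun _ => starRingEnd ℂ (v (Sum.inr i))) c

/-- The block matrix `−(i/2)·[[M M*, −M J₁ Mᵀ],[−conj(M) J₁ M*, −conj(M) Mᵀ]]`. -/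
noncomputable def blockMoment (n : ℕ) (M : Matrix (Fin n) (Fin 1 ⊕ Fin 1) ℂ) :
    Matrix (Fin n ⊕ Fin n) (Fin n ⊕ Fin n) ℂ :=
  (-(Complex.I / 2)) •
    Matrix.fromBlocks (M * Mᴴ) (-(M * J1 * Mᵀ))
      (-(M.map (starRingEnd ℂ) * J1 * Mᴴ)) (-(M.map (starRingEnd ℂ) * Mᵀ))

/-- If `hᵀ J₁ h = J₁` then also `h J₁ hᵀ = J₁` (both say `det h = 1`). -/
lemma sp1_flip (h : Matrix (Fin 1 ⊕ Fin 1) (Fin 1 ⊕ Fin 1) ℂ)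
    (hJ : hᵀ * J1 * h = J1) : h * J1 * hᵀ = J1 := by
  have key : h (.inl 0) (.inl 0) * h (.inr 0) (.inr 0)
      - h (.inr 0) (.inl 0) * h (.inl 0) (.inr 0) = 1 := by
    have := congrFun (congrFun hJ (Sum.inl 0)) (Sum.inr 0)
    simp [J1, Matrix.mul_apply, Fintype.sum_sum_type] at this
    linear_combination this
  ext x y
  cases x with
  | inl a =>
    cases y with
    | inl b => simp [J1, Matrix.mul_apply, Fintype.sum_sum_type, Fin.eq_zero]; ring
    | inr b =>
      simp [J1, Matrix.mul_apply, Fintype.sum_sum_type, Fin.eq_zero]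
      linear_combination key
  | inr a =>
    cases y with
    | inl b =>
      simp [J1, Matrix.mul_apply, Fintype.sum_sum_type, Fin.eq_zero]
      linear_combination -key
    | inr b => simp [J1, Matrix.mul_apply, Fintype.sum_sum_type, Fin.eq_zero]; ring

lemma J1_map_conj : J1.map (starRingEnd ℂ) = J1 := by
  ext x y; cases x <;> cases y <;> simp [J1, Matrix.one_apply, Fin.eq_zero]

theorem moment_map_ostar_block_form (n : ℕ) (hn : 1 ≤ n) :
    -- (a) the moment map equals the block matrix expression in terms of `v₊`
    (∀ v : Fin n ⊕ Fin n → ℂ,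
      (-(Complex.I / 2)) •
          (Matrix.vecMulVec v (star v) * Inn n
            - Smat n * (Matrix.vecMulVec v (star v) * Inn n)ᵀ * Smat n)
        = blockMoment n (vPlus n v)) ∧
    -- (b) `Sp(1)`-invariance: the block matrix is unchanged when `v₊` is replaced by `v₊ h`
    (∀ h : Matrix (Fin 1 ⊕ Fin 1) (Fin 1 ⊕ Fin 1) ℂ,
      hᵀ * J1 * h = J1 → hᴴ * h = 1 →
      ∀ v : Fin n ⊕ Fin n → ℂ,
        blockMoment n (vPlus n v * h) = blockMoment n (vPlus n v)) := by
  constructor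
  · intro v
    ext x y
    cases x <;> cases y <;>
      simp [blockMoment, vPlus, Inn, Smat, J1, Matrix.mul_apply, Matrix.vecMulVec_apply,
        Fintype.sum_sum_type, Matrix.one_apply, Finset.mul_sum, Finset.sum_mul,
        mul_ite, ite_mul, Fin.eq_zero] <;> ring
  · intro h hJ hU v
    set M := vPlus n v with hM
    have hU' : h * hᴴ = 1 := mul_eq_one_comm.mp hU
    have hJ' : h * J1 * hᵀ = J1 := sp1_flip h hJ
    have hmapCT : hᴴ.map (starRingEnd ℂ) = hᵀ := by
      ext x y; simp [Matrix.conjTranspose_apply]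
    have hconjJ : h.map (starRingEnd ℂ) * J1 * hᴴ = J1 := by
      have h1 : (h.map (starRingEnd ℂ))ᵀ * J1 * h.map (starRingEnd ℂ) = J1 := by
        have := congrArg (fun A => A.map (starRingEnd ℂ)) hJ
        simpa [Matrix.map_mul, J1_map_conj, Matrix.transpose_map] using this
      have h2 := sp1_flip (h.map (starRingEnd ℂ)) h1
      have h3 : (h.map (starRingEnd ℂ))ᵀ = hᴴ := by
        ext x y; simp [Matrix.conjTranspose_apply]
      rwa [h3] at h2
    have hconjU : h.map (starRingEnd ℂ) * hᵀ = 1 := by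
      have := congrArg (fun A => A.map (starRingEnd ℂ)) hU'
      simpa [Matrix.map_mul, hmapCT, Matrix.map_one] using this
    have e1 : M * h * (M * h)ᴴ = M * Mᴴ := by
      rw [Matrix.conjTranspose_mul, ← Matrix.mul_assoc, Matrix.mul_assoc M h hᴴ, hU',
        Matrix.mul_one]
    have e2 : M * h * J1 * (M * h)ᵀ = M * J1 * Mᵀ := by
      rw [Matrix.transpose_mul, ← Matrix.mul_assoc, Matrix.mul_assoc M h J1,
        Matrix.mul_assoc M (h * J1) hᵀ, hJ']
    have e3 : (M * h).map (starRingEnd ℂ) * J1 * (M * h)ᴴ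
        = M.map (starRingEnd ℂ) * J1 * Mᴴ := by
      rw [Matrix.conjTranspose_mul, Matrix.map_mul, ← Matrix.mul_assoc,
        Matrix.mul_assoc (M.map (starRingEnd ℂ)) (h.map (starRingEnd ℂ)) J1,
        Matrix.mul_assoc (M.map (starRingEnd ℂ)) (h.map (starRingEnd ℂ) * J1) hᴴ,
        hconjJ]
    have e4 : (M * h).map (starRingEnd ℂ) * (M * h)ᵀ = M.map (starRingEnd ℂ) * Mᵀ := by
      rw [Matrix.transpose_mul, Matrix.map_mul, ← Matrix.mul_assoc,
        Matrix.mul_assoc (M.map (starRingEnd ℂ)) (h.map (starRingEnd ℂ)) hᵀ, hconjU,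
        Matrix.mul_one]
    unfold blockMoment
    rw [e1, e2, e3, e4]
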